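/- arXiv:1110.3817 — 2 statements merged into one kernel-verified Lean document; each statement's English description precedes it below -/
import Mathlib

section
/- For all integers n ≥ 1 and k ≥ 1 and every real number α, the sum over all k-even set partitions π of {1,…,nk} of α^{#π} · ∏_{b ∈ π} (#b − 1)! equals [(nk)!/n!] · (α/k)^{↑n}. (Equivalently, (1/(nk)!) ∑_{π ∈ P_{[nk]:k}} α^{#π} Γ(π) = (α/k)^{↑n}/n!, where Γ(π) := ∏_{b∈π} Γ(#b).) -/
/-- The rising factorial `x^{↑n} = x(x+1)⋯(x+n−1)`. -/
def risingFactorial (x : ℝ) (n : ℕ) : ℝ := ∏ i ∈ Finset.range n, (x + i)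

/-- A set partition is even of order `k` (`k`-even) if every block size is divisible
by `k`. -/
def IsEven {N : ℕ} (k : ℕ) (π : Finpartition (Finset.univ : Finset (Fin N))) : Prop :=
  ∀ b ∈ π.parts, k ∣ b.card

instance {N k : ℕ} (π : Finpartition (Finset.univ : Finset (Fin N))) :
    Decidable (IsEven k π) := by unfold IsEven; infer_instance

namespace EvenPartitionAux

open Finset

/-! ### Auxiliary real-analytic lemmas -/

noncomputable def gaux (k : ℕ) (α : ℝ) (m : ℕ) : ℝ :=
  risingFactorial (α / k) m / m.factorial

lemma gaux_succ (k : ℕ) (α : ℝ) (m : ℕ) :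
    gaux k α (m + 1) = gaux k α m * (α / k + m) / (m + 1) := by
  have h1 : ((m : ℝ) + 1) ≠ 0 := by positivity
  have h2 : (m.factorial : ℝ) ≠ 0 := Nat.cast_ne_zero.2 m.factorial_ne_zero
  simp only [gaux, risingFactorial, prod_range_succ, Nat.factorial_succ]
  push_cast
  field_simp

lemma gaux_rec (k : ℕ) (hk : 1 ≤ k) (α : ℝ) (m : ℕ) :
    α * ∑ i ∈ range m, gaux k α i = (m * k : ℕ) * gaux k α m := by
  have hk0 : (k : ℝ) ≠ 0 := Nat.cast_ne_zero.2 (by omega)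
  induction m with
  | zero => simp
  | succ m ih =>
    rw [sum_range_succ, mul_add, ih, gaux_succ]
    push_cast
    field_simp
    ring

lemma sum_div_indicator (k : ℕ) (hk : 1 ≤ k) (m : ℕ) (h : ℕ → ℝ) :
    ∑ c ∈ range (m * k), (if k ∣ (c + 1) then h c else 0)
      = ∑ j ∈ range m, h ((j + 1) * k - 1) := by
  induction m with
  | zero => simp
  | succ m ih =>
    have hmk : (m + 1) * k = m * k + k := by ring
    rw [hmk, Finset.sum_range_add, ih, Finset.sum_range_succ]
    congr 1
    rw [Finset.sum_eq_single (k - 1)]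
    · have hdvd : k ∣ m * k + (k - 1) + 1 := by
        have : m * k + (k - 1) + 1 = (m + 1) * k := by omega
        rw [this]; exact Dvd.intro_left _ rfl
      rw [if_pos hdvd]
      congr 1
      omega
    · intro c hc hne
      rw [if_neg]
      intro hd
      have h1 : k ∣ c + 1 := by
        have heq : m * k + c + 1 = k * m + (c + 1) := by ring
        rw [heq] at hd
        exact (Nat.dvd_add_right ⟨m, rfl⟩).mp hd
      have h2 := Nat.le_of_dvd (by omega) h1
      have h3 : c < k := Finset.mem_range.1 hc
      omega
    · intro hmem
      exact absurd (Finset.mem_range.2 (by omega)) hmem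

/-! ### The weighted sum over even partitions of a finset -/

variable {β : Type*} [DecidableEq β]

noncomputable def Wt (k : ℕ) (α : ℝ) (s : Finset β) : ℝ :=
  ∑ π : Finpartition s, if ∀ b ∈ π.parts, k ∣ b.card then
    α ^ π.parts.card * ∏ b ∈ π.parts, ((b.card - 1).factorial : ℝ) else 0

lemma Wt_empty (k : ℕ) (α : ℝ) : Wt k α (∅ : Finset β) = 1 := by
  haveI : Unique (Finpartition (∅ : Finset β)) :=
    Finset.bot_eq_empty (α := β) ▸ inferInstance
  have h : ∀ π : Finpartition (∅ : Finset β), π.parts = ∅ :=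
    fun π => Finpartition.parts_eq_empty_iff.2 rfl
  rw [Wt, Fintype.sum_eq_single default]
  · simp [h]
  · intro π hπ
    exact absurd (Subsingleton.elim π default) hπ

lemma parts_avoid_part {s : Finset β} (P : Finpartition s) {t : Finset β} (ht : t ∈ P.parts) :
    (P.avoid t).parts = P.parts.erase t := by
  ext c
  rw [Finpartition.mem_avoid, Finset.mem_erase]
  constructor
  · rintro ⟨d, hd, hdt, rfl⟩
    have hne : d ≠ t := fun h => hdt (h ▸ le_refl _)
    have : Disjoint d t := P.disjoint hd ht hne
    rw [Finset.sdiff_eq_self_of_disjoint this]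
    exact ⟨hne, hd⟩
  · rintro ⟨hne, hc⟩
    refine ⟨c, hc, ?_, ?_⟩
    · intro hle
      obtain ⟨x, hx⟩ := P.nonempty_of_mem_parts hc
      exact hne (P.eq_of_mem_parts hc ht hx (hle hx))
    · exact Finset.sdiff_eq_self_of_disjoint (P.disjoint hc ht hne)

lemma finpart_heq {A B : Finset β} (h : A = B)
    (σ : Finpartition A) (τ : Finpartition B) (hp : σ.parts = τ.parts) : HEq σ τ := by
  subst h; exact heq_of_eq (Finpartition.ext hp)

lemma Wt_rec (k : ℕ) (α : ℝ) (s : Finset β) (a : β) (ha : a ∈ s) :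
    Wt k α s = ∑ u ∈ (s.erase a).powerset,
      (if k ∣ (u.card + 1) then α * (u.card).factorial * Wt k α (s \ insert a u) else 0) := by
  -- rewrite RHS as a double sum
  have step : ∀ u ∈ (s.erase a).powerset,
      (if k ∣ (u.card + 1) then α * (u.card).factorial * Wt k α (s \ insert a u) else 0)
      = ∑ σ : Finpartition (s \ insert a u),
          (if k ∣ (u.card + 1) ∧ ∀ b ∈ σ.parts, k ∣ b.card then
            α * (u.card).factorial *
              (α ^ σ.parts.card * ∏ b ∈ σ.parts, ((b.card - 1).factorial : ℝ)) else 0) := by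
    intro u _
    rw [Wt]
    split_ifs with h
    · rw [Finset.mul_sum]
      refine Finset.sum_congr rfl fun σ _ => ?_
      split_ifs with h1 h2 <;> simp_all
    · rw [Finset.sum_eq_zero]
      intro σ _
      rw [if_neg (fun hc => h hc.1)]
  rw [Finset.sum_congr rfl step, Finset.sum_sigma']
  symm
  refine Finset.sum_bij'
    (i := fun p hp => (p.2.extend (b := insert a p.1) (by simp)
        Finset.sdiff_disjoint (by
          simp only [Finset.mem_sigma, Finset.mem_powerset] at hp
          exact sdiff_sup_cancel (le_iff_subset.2 (Finset.insert_subset ha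
            (hp.1.trans (Finset.erase_subset _ _))))) : Finpartition s))
    (j := fun π _ => ⟨(π.part a).erase a,
        (π.avoid (π.part a)).copy (by rw [Finset.insert_erase (π.mem_part ha)])⟩)
    ?_ ?_ ?_ ?_ ?_
  case refine_1 => intro p hp; exact Finset.mem_univ _
  case refine_2 =>
    intro π _
    simp only [Finset.mem_sigma, Finset.mem_powerset, Finset.mem_univ, and_true]
    intro x hx
    simp only [Finset.mem_erase] at hx ⊢
    exact ⟨hx.1, (π.le (π.part_mem.2 ha)) hx.2⟩
  case refine_3 =>
    -- j ∘ i = id on sigma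
    rintro ⟨u, σ⟩ hp
    simp only [Finset.mem_sigma, Finset.mem_powerset, Finset.mem_univ, and_true] at hp
    have hau : a ∉ u := fun h => (Finset.mem_erase.1 (hp h)).1 rfl
    have hnot : insert a u ∉ σ.parts := by
      intro h
      have := σ.le h (Finset.mem_insert_self a u)
      simp at this
    have h1 : ∀ (P : Finpartition s), P.parts = insert (insert a u) σ.parts →
        (⟨(P.part a).erase a,
          (P.avoid (P.part a)).copy (by rw [Finset.insert_erase (P.mem_part ha)])⟩ :
            Σ v : Finset β, Finpartition (s \ insert a v)) = ⟨u, σ⟩ := by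
      intro P hP
      have hpart : P.part a = insert a u := by
        refine P.part_eq_of_mem ?_ (Finset.mem_insert_self a u)
        rw [hP]; exact Finset.mem_insert_self _ _
      have hu : (P.part a).erase a = u := by rw [hpart, Finset.erase_insert hau]
      refine Sigma.ext hu (finpart_heq (by dsimp only; rw [hu]) _ _ ?_)
      rw [Finpartition.copy_parts, parts_avoid_part P (P.part_mem.2 ha), hpart, hP,
        Finset.erase_insert hnot]
    exact h1 _ rfl
  case refine_4 =>
    -- i ∘ j = id on partitions
    intro π _
    apply Finpartition.ext
    rw [Finpartition.extend_parts, Finpartition.copy_parts,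
      parts_avoid_part π (π.part_mem.2 ha), Finset.insert_erase (π.mem_part ha),
      Finset.insert_erase (π.part_mem.2 ha)]
  case refine_5 =>
    -- values agree
    rintro ⟨u, σ⟩ hp
    simp only [Finset.mem_sigma, Finset.mem_powerset, Finset.mem_univ, and_true] at hp
    have hau : a ∉ u := fun h => (Finset.mem_erase.1 (hp h)).1 rfl
    have hnot : insert a u ∉ σ.parts := by
      intro h
      have := σ.le h (Finset.mem_insert_self a u)
      simp at this
    simp only [Finpartition.extend_parts, Finset.forall_mem_insert,
      Finset.card_insert_of_notMem hnot, Finset.prod_insert hnot,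
      Finset.card_insert_of_notMem hau]
    split_ifs with h
    · simp only [Nat.add_sub_cancel, pow_succ]
      ring
    · rfl

lemma Wt_eq (k : ℕ) (hk : 1 ≤ k) (α : ℝ) :
    ∀ m : ℕ, ∀ s : Finset β, s.card = m * k →
      Wt k α s = ((m * k).factorial : ℝ) * gaux k α m := by
  intro m
  induction m using Nat.strong_induction_on with
  | _ m ih =>
    intro s hs
    rcases Nat.eq_zero_or_pos m with rfl | hm
    · have hse : s = ∅ := Finset.card_eq_zero.1 (by simpa using hs)
      subst hse
      simp [Wt_empty, gaux, risingFactorial]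
    · obtain ⟨a, ha⟩ : s.Nonempty := Finset.card_pos.1 (by rw [hs]; exact Nat.mul_pos hm hk)
      rw [Wt_rec k α s a ha]
      have hcard : (s.erase a).card = m * k - 1 := by rw [Finset.card_erase_of_mem ha, hs]
      have step1 : ∀ u ∈ (s.erase a).powerset,
          (if k ∣ (u.card + 1) then α * (u.card).factorial * Wt k α (s \ insert a u) else 0)
          = (if k ∣ (u.card + 1) then α * (u.card).factorial *
              (((m * k - (u.card + 1)).factorial : ℝ) * gaux k α (m - (u.card + 1) / k))
            else 0) := by
        intro u hu
        rw [Finset.mem_powerset] at hu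
        split_ifs with hdvd
        · congr 1
          obtain ⟨j, hj⟩ := hdvd
          have hj0 : 1 ≤ j := by
            rcases Nat.eq_zero_or_pos j with rfl | h
            · omega
            · exact h
          have hcu : u.card ≤ m * k - 1 := hcard ▸ Finset.card_le_card hu
          have hMk : 1 ≤ m * k := Nat.mul_pos hm hk
          have hjm : j ≤ m := by
            by_contra hcon
            push_neg at hcon
            have h5 : m * k < k * j := by
              rw [mul_comm k j]
              exact Nat.mul_lt_mul_of_pos_right hcon (by omega)
            omega
          have hins : insert a u ⊆ s :=
            Finset.insert_subset ha (hu.trans (Finset.erase_subset _ _))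
          have hau : a ∉ u := fun h => (Finset.mem_erase.1 (hu h)).1 rfl
          have hc2 : (s \ insert a u).card = m * k - (u.card + 1) := by
            rw [Finset.card_sdiff_of_subset hins, hs, Finset.card_insert_of_notMem hau]
          have hdiv : (u.card + 1) / k = j := by
            rw [hj]; exact Nat.mul_div_cancel_left j (by omega)
          have hsub : m * k - (u.card + 1) = (m - j) * k := by
            rw [hj, Nat.sub_mul, mul_comm j k]
          rw [hsub, hdiv]
          exact ih (m - j) (by omega) _ (by rw [hc2, hsub])
        · rfl
      rw [Finset.sum_congr rfl step1, Finset.sum_powerset]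
      have step2 : ∀ c ∈ range ((s.erase a).card + 1),
          (∑ u ∈ powersetCard c (s.erase a),
            (if k ∣ (u.card + 1) then α * (u.card).factorial *
              (((m * k - (u.card + 1)).factorial : ℝ) * gaux k α (m - (u.card + 1) / k))
            else 0))
          = ((m * k - 1).choose c : ℝ) *
            (if k ∣ (c + 1) then α * c.factorial *
              (((m * k - (c + 1)).factorial : ℝ) * gaux k α (m - (c + 1) / k)) else 0) := by
        intro c _
        rw [Finset.sum_powersetCard c (s.erase a)
          (fun d => (if k ∣ (d + 1) then α * d.factorial *
            (((m * k - (d + 1)).factorial : ℝ) * gaux k α (m - (d + 1) / k)) else 0)),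
          hcard, nsmul_eq_mul]
      rw [Finset.sum_congr rfl step2, hcard]
      have hmk1 : m * k - 1 + 1 = m * k := by
        have : 1 ≤ m * k := Nat.mul_pos hm hk
        omega
      rw [hmk1]
      simp only [mul_ite, mul_zero]
      rw [sum_div_indicator k hk m _]
      have step4 : ∀ j ∈ range m,
          (((m * k - 1).choose ((j + 1) * k - 1) : ℝ) *
            (α * (((j + 1) * k - 1).factorial : ℝ) *
              (((m * k - ((j + 1) * k - 1 + 1)).factorial : ℝ) *
                gaux k α (m - ((j + 1) * k - 1 + 1) / k))))
          = ((m * k - 1).factorial : ℝ) * (α * gaux k α (m - 1 - j)) := by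
        intro j hj
        rw [Finset.mem_range] at hj
        have hc1 : (j + 1) * k - 1 + 1 = (j + 1) * k := by
          have : 1 ≤ (j + 1) * k := Nat.mul_pos (by omega) hk
          omega
        have hjk : (j + 1) * k ≤ m * k := Nat.mul_le_mul_right k (by omega)
        rw [hc1]
        have hdivjk : ((j + 1) * k) / k = j + 1 := Nat.mul_div_cancel _ (by omega)
        rw [hdivjk]
        have hm1 : m - (j + 1) = m - 1 - j := by omega
        rw [hm1]
        have hsub2 : m * k - (j + 1) * k = (m - 1 - j) * k := by
          rw [← Nat.sub_mul, hm1]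
        rw [hsub2]
        have hcle : (j + 1) * k - 1 ≤ m * k - 1 := Nat.sub_le_sub_right hjk 1
        have key := Nat.choose_mul_factorial_mul_factorial hcle
        have hNc : m * k - 1 - ((j + 1) * k - 1) = (m - 1 - j) * k := by
          rw [← hsub2]; omega
        rw [hNc] at key
        have keyR : (((m * k - 1).choose ((j + 1) * k - 1) : ℝ)) *
            (((j + 1) * k - 1).factorial : ℝ) * (((m - 1 - j) * k).factorial : ℝ)
            = ((m * k - 1).factorial : ℝ) := by exact_mod_cast congrArg Nat.cast key
        calc (((m * k - 1).choose ((j + 1) * k - 1) : ℝ) *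
            (α * (((j + 1) * k - 1).factorial : ℝ) *
              ((((m - 1 - j) * k).factorial : ℝ) * gaux k α (m - 1 - j))))
            = ((((m * k - 1).choose ((j + 1) * k - 1) : ℝ)) *
                (((j + 1) * k - 1).factorial : ℝ) * (((m - 1 - j) * k).factorial : ℝ)) *
              (α * gaux k α (m - 1 - j)) := by ring
          _ = ((m * k - 1).factorial : ℝ) * (α * gaux k α (m - 1 - j)) := by rw [keyR]
      rw [Finset.sum_congr rfl step4, ← Finset.mul_sum, ← Finset.mul_sum,
        Finset.sum_range_reflect (fun i => gaux k α i) m, gaux_rec k hk α m]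
      have hfac : ((m * k - 1).factorial : ℝ) * ((m * k : ℕ) : ℝ)
          = ((m * k).factorial : ℝ) := by
        have h1 : (m * k) * (m * k - 1).factorial = (m * k).factorial :=
          Nat.mul_factorial_pred (Nat.mul_pos hm hk).ne'
        push_cast [← h1]
        ring
      rw [← mul_assoc, hfac]

end EvenPartitionAux

open EvenPartitionAux in
/-- The combinatorial identity for even partitions:
`∑_{π ∈ P_{[nk]:k}} α^{#π} ∏_{b∈π} (#b−1)! = [(nk)!/n!]·(α/k)^{↑n}`. -/
theorem even_partition_identity (n k : ℕ) (hn : 1 ≤ n) (hk : 1 ≤ k) (α : ℝ) :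
    ∑ π ∈ (Finset.univ : Finset (Finpartition (Finset.univ : Finset (Fin (n * k))))).filter
        (fun π => IsEven k π),
      α ^ π.parts.card * ∏ b ∈ π.parts, (Nat.factorial (b.card - 1) : ℝ) =
    ((Nat.factorial (n * k) : ℝ) / (Nat.factorial n : ℝ)) * risingFactorial (α / k) n := by
  have h := Wt_eq (β := Fin (n * k)) k hk α n Finset.univ (by simp)
  have hW : ∑ π ∈ (Finset.univ : Finset (Finpartition
        (Finset.univ : Finset (Fin (n * k))))).filter (fun π => IsEven k π),
      α ^ π.parts.card * ∏ b ∈ π.parts, (Nat.factorial (b.card - 1) : ℝ)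
      = Wt k α (Finset.univ : Finset (Fin (n * k))) := by
    rw [Wt, Finset.sum_filter]
    refine Finset.sum_congr rfl fun π _ => ?_
    unfold IsEven
    split_ifs with hh
    · exact if_pos hh
    · exact if_neg hh
  rw [hW, h, gaux]
  have hn0 : (n.factorial : ℝ) ≠ 0 := Nat.cast_ne_zero.2 n.factorial_ne_zero
  field_simp
end

section
/- For all integers n ≥ 1 and k ≥ 1 and every real number α, the sum of α^{#σ} over all permutations σ of {1,…,nk} whose every cycle length is divisible by k equals [(nk)!/n!] · (α/k)^{↑n}, where #σ is the number of cycles of σ. (This is the permutation form of the even-partition identity, obtained since each k-even partition π corresponds to ∏_{b∈π} Γ(#b) permutations whose cycles are the blocks of π.) -/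
open Equiv Equiv.Perm Finset

/-- The number of cycles of a permutation, fixed points counting as cycles of length 1. -/
def cycleCount {N : ℕ} (σ : Equiv.Perm (Fin N)) : ℕ :=
  σ.cycleType.card + (Finset.univ.filter fun i => σ i = i).card

namespace EPI

/-- Orbit length. -/
def orbLen {N : ℕ} (σ : Perm (Fin N)) (x : Fin N) : ℕ :=
  Fintype.card {y : Fin N // σ.SameCycle x y}

lemma sameCycle_map {M M' : ℕ} {σ : Perm (Fin M)} {σ' : Perm (Fin M')} (g : Fin M → Fin M')
    (hg : ∀ x, σ'.SameCycle (g x) (g (σ x))) {x y : Fin M} (h : σ.SameCycle x y) :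
    σ'.SameCycle (g x) (g y) := by
  obtain ⟨i, -, rfl⟩ := h.exists_pow_eq'
  clear h
  induction i with
  | zero => simpa using SameCycle.refl σ' (g x)
  | succ i ih =>
      have h2 : (σ ^ (i + 1)) x = σ ((σ ^ i) x) := by
        rw [pow_succ', Equiv.Perm.mul_apply]
      rw [h2]
      exact ih.trans (hg _)

lemma sameCycle_fixed {M : ℕ} {σ : Perm (Fin M)} {x y : Fin M} (hx : σ x = x) :
    σ.SameCycle x y ↔ y = x := by
  constructor
  · rintro ⟨i, rfl⟩
    exact Equiv.Perm.zpow_apply_eq_self_of_apply_eq_self hx i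
  · rintro rfl; exact SameCycle.refl σ _

lemma orbLen_eq_of_sameCycle {M : ℕ} {σ : Perm (Fin M)} {x y : Fin M} (h : σ.SameCycle x y) :
    orbLen σ x = orbLen σ y := by
  apply Fintype.card_congr
  exact Equiv.subtypeEquivRight (fun z => ⟨fun hz => h.symm.trans hz, fun hz => h.trans hz⟩)

lemma orbLen_fixed {M : ℕ} {σ : Perm (Fin M)} {x : Fin M} (hx : σ x = x) :
    orbLen σ x = 1 := by
  rw [orbLen, Fintype.card_eq_one_iff]
  exact ⟨⟨x, SameCycle.refl σ x⟩, fun z => Subtype.ext ((sameCycle_fixed hx).mp z.2)⟩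

lemma orbLen_nat {M : ℕ} (σ : Perm (Fin M)) (x : Fin M) :
    orbLen σ x = Nat.card {y : Fin M // σ.SameCycle x y} := (Nat.card_eq_fintype_card).symm

/-- The setoid of orbits. -/
def scSetoid {M : ℕ} (σ : Perm (Fin M)) : Setoid (Fin M) :=
  ⟨σ.SameCycle, ⟨fun x => SameCycle.refl σ x, SameCycle.symm, SameCycle.trans⟩⟩

lemma cycleCount_eq {M : ℕ} (σ : Perm (Fin M)) :
    cycleCount σ = Nat.card (Quotient (scSetoid σ)) := by
  classical
  -- map orbits to cycle factors ⊕ fixed points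
  have hwd : ∀ (a b : Fin M), σ.SameCycle a b →
      (if h : σ a = a then (Sum.inr ⟨a, h⟩ : {c // c ∈ σ.cycleFactorsFinset} ⊕ {x : Fin M // σ x = x})
       else Sum.inl ⟨σ.cycleOf a, cycleOf_mem_cycleFactorsFinset_iff.mpr (mem_support.mpr h)⟩) =
      (if h : σ b = b then (Sum.inr ⟨b, h⟩ : {c // c ∈ σ.cycleFactorsFinset} ⊕ {x : Fin M // σ x = x})
       else Sum.inl ⟨σ.cycleOf b, cycleOf_mem_cycleFactorsFinset_iff.mpr (mem_support.mpr h)⟩) := by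
    intro a b hab
    by_cases ha : σ a = a
    · have : b = a := (sameCycle_fixed ha).mp hab
      subst this; rfl
    · have hb : ¬ σ b = b := by
        intro hb
        apply ha
        have hab2 : a = b := (sameCycle_fixed hb).mp hab.symm
        subst hab2
        exact hb
      rw [dif_neg ha, dif_neg hb]
      exact congrArg Sum.inl (Subtype.ext hab.cycleOf_eq)
  set f : Quotient (scSetoid σ) → {c // c ∈ σ.cycleFactorsFinset} ⊕ {x : Fin M // σ x = x} :=
    Quotient.lift _ hwd with hf
  have hbij : Function.Bijective f := by
    constructor
    · intro c₁ c₂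
      induction c₁ using Quotient.inductionOn with | h a =>
      induction c₂ using Quotient.inductionOn with | h b =>
      intro hab
      apply Quotient.sound
      show σ.SameCycle a b
      simp only [hf] at hab
      erw [Quotient.lift_mk, Quotient.lift_mk] at hab
      by_cases ha : σ a = a <;> by_cases hb : σ b = b
      · rw [dif_pos ha, dif_pos hb] at hab
        obtain rfl : a = b := by simpa using hab
        exact SameCycle.refl σ _
      · rw [dif_pos ha, dif_neg hb] at hab; exact absurd hab (by simp)
      · rw [dif_neg ha, dif_pos hb] at hab; exact absurd hab (by simp)
      · rw [dif_neg ha, dif_neg hb] at hab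
        have hco : σ.cycleOf a = σ.cycleOf b := by simpa using hab
        have hbmem : b ∈ (σ.cycleOf a).support := by
          rw [hco]
          exact mem_support_cycleOf_iff.mpr ⟨SameCycle.refl σ _, mem_support.mpr hb⟩
        exact (mem_support_cycleOf_iff.mp hbmem).1
    · rintro (⟨c, hc⟩ | ⟨x, hx⟩)
      · have hcyc : c.IsCycle := (mem_cycleFactorsFinset_iff.mp hc).1
        obtain ⟨a, ha, -⟩ := hcyc
        have hasupp : a ∈ c.support := mem_support.mpr ha
        have hca : c = σ.cycleOf a := cycle_is_cycleOf hasupp hc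
        have haσ : ¬ σ a = a := by
          have := (mem_cycleFactorsFinset_iff.mp hc).2 a hasupp
          rw [← this]; exact ha
        refine ⟨Quotient.mk _ a, ?_⟩
        simp only [hf, Quotient.lift_mk]
        erw [Quotient.lift_mk]
        rw [dif_neg haσ]
        exact congrArg Sum.inl (Subtype.ext hca.symm)
      · exact ⟨Quotient.mk _ x, by simp only [hf, Quotient.lift_mk]; erw [Quotient.lift_mk]; rw [dif_pos hx]⟩
  have h1 : Nat.card (Quotient (scSetoid σ)) =
      Nat.card ({c // c ∈ σ.cycleFactorsFinset} ⊕ {x : Fin M // σ x = x}) :=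
    Nat.card_eq_of_bijective f hbij
  rw [h1, Nat.card_sum]
  have h2 : Nat.card {c // c ∈ σ.cycleFactorsFinset} = σ.cycleType.card := by
    rw [Nat.card_eq_fintype_card, Fintype.card_coe]
    show σ.cycleFactorsFinset.card = _
    rw [cycleType]
    simp
  have h3 : Nat.card {x : Fin M // σ x = x} = (Finset.univ.filter fun i => σ i = i).card := by
    rw [Nat.card_eq_fintype_card, Fintype.card_subtype]
  rw [cycleCount, h2, h3]


section Insert
variable {N : ℕ} (τ : Perm (Fin N))

-- Case p = 0 : σ₀ = decomposeFin.symm (0, τ)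
lemma z_apply_zero : (decomposeFin.symm (0, τ)) 0 = 0 := by simp

lemma z_apply_succ (x : Fin N) : (decomposeFin.symm (0, τ)) x.succ = (τ x).succ := by
  simp [Equiv.Perm.decomposeFin_symm_apply_succ]

lemma z_sc_zero (b : Fin (N + 1)) :
    (decomposeFin.symm (0, τ)).SameCycle 0 b ↔ b = 0 :=
  sameCycle_fixed (z_apply_zero τ)

lemma z_sc_succ (x y : Fin N) :
    (decomposeFin.symm (0, τ)).SameCycle x.succ y.succ ↔ τ.SameCycle x y := by
  constructor
  · intro h
    have := sameCycle_map (σ := decomposeFin.symm (0, τ)) (σ' := τ) (fun a => Fin.cases x (fun z => z) a)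
      (fun a => by
        induction a using Fin.cases with
        | zero => rw [z_apply_zero]
        | succ z => rw [z_apply_succ]; simp only [Fin.cases_succ]; exact ⟨1, by simp⟩) h
    simpa using this
  · intro h
    exact sameCycle_map (σ := τ) (σ' := decomposeFin.symm (0, τ)) Fin.succ
      (fun z => ⟨1, by rw [zpow_one, z_apply_succ]⟩) h

lemma z_orbLen_zero : orbLen (decomposeFin.symm (0, τ)) 0 = 1 :=
  orbLen_fixed (z_apply_zero τ)

lemma z_orbLen_succ (x : Fin N) :
    orbLen (decomposeFin.symm (0, τ)) x.succ = orbLen τ x := by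
  rw [orbLen_nat, orbLen_nat]
  apply (Nat.card_eq_of_bijective
    (fun y : {y : Fin N // τ.SameCycle x y} => (⟨y.1.succ, (z_sc_succ τ x y.1).mpr y.2⟩ :
      {b : Fin (N + 1) // (decomposeFin.symm (0, τ)).SameCycle x.succ b}))
    ⟨?_, ?_⟩).symm
  · intro a b hab
    exact Subtype.ext (Fin.succ_injective _ (congrArg Subtype.val hab))
  · rintro ⟨b, hb⟩
    induction b using Fin.cases with
    | zero =>
        exfalso
        exact (Fin.succ_ne_zero x) ((z_sc_zero τ _).mp hb.symm)
    | succ y => exact ⟨⟨y, (z_sc_succ τ x y).mp hb⟩, rfl⟩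

lemma z_cycleCount : cycleCount (decomposeFin.symm (0, τ)) = cycleCount τ + 1 := by
  have hcard : Nat.card (Option (Quotient (scSetoid τ))) = Nat.card (Quotient (scSetoid τ)) + 1 := by
    rw [Nat.card_congr (Equiv.optionEquivSumPUnit.{0,0} _), Nat.card_sum]
    simp
  set σ := decomposeFin.symm (0, τ) with hσ
  rw [cycleCount_eq, cycleCount_eq]
  have hb : Function.Bijective
      (fun o : Option (Quotient (scSetoid τ)) =>
        (Option.rec (Quotient.mk (scSetoid σ) 0)
          (fun c => Quotient.map' Fin.succ
            (fun a b hab => (z_sc_succ τ a b).mpr hab) c) o : Quotient (scSetoid σ))) := by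
    constructor
    · rintro (_ | c₁) (_ | c₂) h
      · rfl
      · exfalso
        induction c₂ using Quotient.inductionOn with | h b =>
        have : σ.SameCycle 0 b.succ := Quotient.exact h
        exact Fin.succ_ne_zero b ((z_sc_zero τ _).mp this)
      · exfalso
        induction c₁ using Quotient.inductionOn with | h b =>
        have : σ.SameCycle 0 b.succ := Quotient.exact h.symm
        exact Fin.succ_ne_zero b ((z_sc_zero τ _).mp this)
      · induction c₁ using Quotient.inductionOn with | h a =>
        induction c₂ using Quotient.inductionOn with | h b =>
        have : σ.SameCycle a.succ b.succ := Quotient.exact h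
        exact congrArg some (Quotient.sound ((z_sc_succ τ a b).mp this))
    · intro c
      induction c using Quotient.inductionOn with | h b =>
      induction b using Fin.cases with
      | zero => exact ⟨none, rfl⟩
      | succ y => exact ⟨some (Quotient.mk _ y), rfl⟩
  have := Nat.card_eq_of_bijective _ hb
  rw [← this, hcard]

-- Case p = q.succ : σ = decomposeFin.symm (q.succ, τ)
variable (q : Fin N)

lemma s_apply_zero : (decomposeFin.symm (q.succ, τ)) 0 = q.succ := by simp

lemma s_apply_succ (x : Fin N) :
    (decomposeFin.symm (q.succ, τ)) x.succ = if τ x = q then 0 else (τ x).succ := by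
  rw [Equiv.Perm.decomposeFin_symm_apply_succ]
  by_cases h : τ x = q
  · rw [if_pos h, h, Equiv.swap_apply_right]
  · rw [if_neg h, Equiv.swap_apply_of_ne_of_ne (Fin.succ_ne_zero _)
      (fun hc => h (Fin.succ_injective _ hc))]

lemma s_sc_fwd {x y : Fin N} (h : τ.SameCycle x y) :
    (decomposeFin.symm (q.succ, τ)).SameCycle x.succ y.succ := by
  refine sameCycle_map Fin.succ (fun z => ?_) h
  by_cases hz : τ z = q
  · have h1 : (decomposeFin.symm (q.succ, τ)) z.succ = 0 := by rw [s_apply_succ, if_pos hz]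
    have h2 : (decomposeFin.symm (q.succ, τ)) 0 = (τ z).succ := by rw [s_apply_zero, hz]
    exact (show SameCycle (decomposeFin.symm (q.succ, τ)) z.succ 0 from
      ⟨1, by rw [zpow_one, h1]⟩).trans ⟨1, by rw [zpow_one, h2]⟩
  · exact ⟨1, by rw [zpow_one, s_apply_succ, if_neg hz]⟩

lemma s_sc_bwd {a b : Fin (N + 1)}
    (h : (decomposeFin.symm (q.succ, τ)).SameCycle a b) :
    τ.SameCycle (Fin.cases q (fun z => z) a) (Fin.cases q (fun z => z) b) := by
  refine sameCycle_map (fun a => Fin.cases q (fun z => z) a) (fun z => ?_) h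
  induction z using Fin.cases with
  | zero =>
      rw [s_apply_zero]
      simp only [Fin.cases_zero, Fin.cases_succ]
      exact SameCycle.refl τ q
  | succ w =>
      rw [s_apply_succ]
      by_cases hw : τ w = q
      · rw [if_pos hw]
        simp only [Fin.cases_zero, Fin.cases_succ]
        rw [← hw]
        exact ⟨1, by simp⟩
      · rw [if_neg hw]
        simp only [Fin.cases_succ]
        exact ⟨1, by simp⟩

lemma s_sc_succ (x y : Fin N) :
    (decomposeFin.symm (q.succ, τ)).SameCycle x.succ y.succ ↔ τ.SameCycle x y := by
  constructor
  · intro h; simpa using s_sc_bwd τ q h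
  · exact s_sc_fwd τ q

lemma s_sc_zero (x : Fin N) :
    (decomposeFin.symm (q.succ, τ)).SameCycle 0 x.succ ↔ τ.SameCycle q x := by
  constructor
  · intro h; simpa using s_sc_bwd τ q h
  · intro h
    exact (show SameCycle (decomposeFin.symm (q.succ, τ)) 0 q.succ from
      ⟨1, by rw [zpow_one, s_apply_zero]⟩).trans (s_sc_fwd τ q h)

lemma s_orbLen_zero :
    orbLen (decomposeFin.symm (q.succ, τ)) 0 = orbLen τ q + 1 := by
  rw [orbLen_nat, orbLen_nat]
  have hcard : Nat.card (Option {y : Fin N // τ.SameCycle q y}) =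
      Nat.card {y : Fin N // τ.SameCycle q y} + 1 := by
    rw [Nat.card_congr (Equiv.optionEquivSumPUnit.{0,0} _), Nat.card_sum]
    simp
  rw [← hcard]
  refine (Nat.card_eq_of_bijective
    (fun o : Option {y : Fin N // τ.SameCycle q y} =>
      (Option.rec ⟨0, SameCycle.refl _ _⟩ (fun y => ⟨y.1.succ, (s_sc_zero τ q y.1).mpr y.2⟩) o :
        {b : Fin (N + 1) // (decomposeFin.symm (q.succ, τ)).SameCycle 0 b})) ⟨?_, ?_⟩).symm
  · rintro (_ | a) (_ | b) hab
    · rfl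
    · exact absurd (congrArg Subtype.val hab).symm (Fin.succ_ne_zero _)
    · exact absurd (congrArg Subtype.val hab) (Fin.succ_ne_zero _)
    · exact congrArg some (Subtype.ext (Fin.succ_injective _ (congrArg Subtype.val hab)))
  · rintro ⟨b, hb⟩
    induction b using Fin.cases with
    | zero => exact ⟨none, rfl⟩
    | succ y => exact ⟨some ⟨y, (s_sc_zero τ q y).mp hb⟩, rfl⟩

lemma s_orbLen_succ (x : Fin N) (hx : ¬ τ.SameCycle q x) :
    orbLen (decomposeFin.symm (q.succ, τ)) x.succ = orbLen τ x := by
  rw [orbLen_nat, orbLen_nat]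
  refine (Nat.card_eq_of_bijective
    (fun y : {y : Fin N // τ.SameCycle x y} => (⟨y.1.succ, (s_sc_succ τ q x y.1).mpr y.2⟩ :
      {b : Fin (N + 1) // (decomposeFin.symm (q.succ, τ)).SameCycle x.succ b})) ⟨?_, ?_⟩).symm
  · intro a b hab
    exact Subtype.ext (Fin.succ_injective _ (congrArg Subtype.val hab))
  · rintro ⟨b, hb⟩
    induction b using Fin.cases with
    | zero =>
        exfalso
        exact hx ((s_sc_zero τ q x).mp (hb.symm.trans (SameCycle.refl _ _)))
    | succ y => exact ⟨⟨y, (s_sc_succ τ q x y).mp hb⟩, rfl⟩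

lemma s_cycleCount :
    cycleCount (decomposeFin.symm (q.succ, τ)) = cycleCount τ := by
  rw [cycleCount_eq, cycleCount_eq]
  refine (Nat.card_eq_of_bijective
    (Quotient.map' Fin.succ (fun a b hab => s_sc_fwd τ q hab) :
      Quotient (scSetoid τ) → Quotient (scSetoid (decomposeFin.symm (q.succ, τ)))) ⟨?_, ?_⟩).symm
  · intro c₁ c₂ h
    induction c₁ using Quotient.inductionOn with | h a =>
    induction c₂ using Quotient.inductionOn with | h b =>
    have : (decomposeFin.symm (q.succ, τ)).SameCycle a.succ b.succ := Quotient.exact h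
    exact Quotient.sound ((s_sc_succ τ q a b).mp this)
  · intro c
    induction c using Quotient.inductionOn with | h b =>
    induction b using Fin.cases with
    | zero =>
        refine ⟨Quotient.mk _ q, Quotient.sound ?_⟩
        show (decomposeFin.symm (q.succ, τ)).SameCycle q.succ 0
        exact (show SameCycle (decomposeFin.symm (q.succ, τ)) 0 q.succ from
          ⟨1, by rw [zpow_one, s_apply_zero]⟩).symm
    | succ y => exact ⟨Quotient.mk _ y, rfl⟩

end Insert

section Sums
variable (k : ℕ) (α : ℝ)

/-- Sum of `α^{#σ}` over `k`-divisible permutations. -/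
def Tsum (N : ℕ) : ℝ :=
  ∑ σ ∈ (Finset.univ : Finset (Perm (Fin N))).filter
      (fun σ => ∀ x : Fin N, k ∣ orbLen σ x),
    α ^ cycleCount σ

/-- Marked sum: the cycle of the marked point `p` has length `≡ j mod k`, all other cycles are
`k`-divisible; weight counts the cycles other than that of `p`. -/
def Hsum (N : ℕ) (p : Fin N) (j : ℕ) : ℝ :=
  ∑ σ ∈ (Finset.univ : Finset (Perm (Fin N))).filter
      (fun σ => orbLen σ p % k = j % k ∧ ∀ x : Fin N, ¬σ.SameCycle p x → k ∣ orbLen σ x),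
    α ^ (cycleCount σ - 1)

lemma Tsum_zero : Tsum k α 0 = 1 := by
  have h1 : ∀ σ : Perm (Fin 0), σ = 1 := fun σ => Equiv.ext fun x => x.elim0
  rw [Tsum, Finset.sum_filter]
  rw [Fintype.sum_eq_single (1 : Perm (Fin 0)) (fun σ hσ => absurd (h1 σ) hσ)]
  simp [cycleCount]

lemma orbLen_conj {N : ℕ} (σ π : Perm (Fin N)) (x : Fin N) :
    orbLen (π * σ * π⁻¹) (π x) = orbLen σ x := by
  rw [orbLen_nat, orbLen_nat]
  refine (Nat.card_eq_of_bijective (fun y : {y : Fin N // σ.SameCycle x y} =>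
    (⟨π y.1, by rw [sameCycle_conj]; simpa using y.2⟩ :
      {b : Fin N // (π * σ * π⁻¹).SameCycle (π x) b})) ⟨?_, ?_⟩).symm
  · intro a b hab
    exact Subtype.ext (π.injective (congrArg Subtype.val hab))
  · rintro ⟨b, hb⟩
    refine ⟨⟨π⁻¹ b, ?_⟩, by simp⟩
    rw [sameCycle_conj] at hb
    simpa using hb

lemma cycleCount_conj {N : ℕ} (σ π : Perm (Fin N)) :
    cycleCount (π * σ * π⁻¹) = cycleCount σ := by
  rw [cycleCount_eq, cycleCount_eq]
  refine (Nat.card_eq_of_bijective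
    (Quotient.map' π (fun a b hab => by
      show (π * σ * π⁻¹).SameCycle (π a) (π b)
      have hab' : σ.SameCycle a b := hab
      rw [sameCycle_conj]; simpa using hab') :
      Quotient (scSetoid σ) → Quotient (scSetoid (π * σ * π⁻¹))) ⟨?_, ?_⟩).symm
  · intro c₁ c₂ h
    induction c₁ using Quotient.inductionOn with | h a =>
    induction c₂ using Quotient.inductionOn with | h b =>
    have h2 : (π * σ * π⁻¹).SameCycle (π a) (π b) := Quotient.exact h
    rw [sameCycle_conj] at h2
    apply Quotient.sound
    show σ.SameCycle a b
    simpa using h2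
  · intro c
    induction c using Quotient.inductionOn with | h b =>
    refine ⟨Quotient.mk _ (π⁻¹ b), Quotient.sound ?_⟩
    show (π * σ * π⁻¹).SameCycle (π (π⁻¹ b)) b
    rw [show π (π⁻¹ b) = b by simp]

lemma Hsum_conj {N : ℕ} (π : Perm (Fin N)) (p : Fin N) (j : ℕ) :
    Hsum k α N (π p) j = Hsum k α N p j := by
  rw [Hsum, Hsum, Finset.sum_filter, Finset.sum_filter]
  refine (Fintype.sum_equiv ((Equiv.mulLeft π).trans (Equiv.mulRight π⁻¹)) _ _
    (fun σ => ?_)).symm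
  have hσ' : ((Equiv.mulLeft π).trans (Equiv.mulRight π⁻¹)) σ = π * σ * π⁻¹ := rfl
  rw [hσ']
  have hcond : (orbLen σ p % k = j % k ∧ ∀ x : Fin N, ¬σ.SameCycle p x → k ∣ orbLen σ x)
      ↔ (orbLen (π * σ * π⁻¹) (π p) % k = j % k ∧
        ∀ x : Fin N, ¬(π * σ * π⁻¹).SameCycle (π p) x → k ∣ orbLen (π * σ * π⁻¹) x) := by
    rw [orbLen_conj]
    apply and_congr Iff.rfl
    constructor
    · intro h x hx
      have hx' : ¬σ.SameCycle p (π⁻¹ x) := by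
        rw [sameCycle_conj] at hx; simpa using hx
      have := h _ hx'
      have h2 := orbLen_conj σ π (π⁻¹ x)
      rw [show π (π⁻¹ x) = x by simp] at h2
      rwa [h2]
    · intro h x hx
      have hx' : ¬(π * σ * π⁻¹).SameCycle (π p) (π x) := by
        rw [sameCycle_conj]; simpa using hx
      have := h _ hx'
      rwa [orbLen_conj] at this
  rw [cycleCount_conj]
  exact if_congr hcond rfl rfl

lemma Hsum_mark {N : ℕ} (p p' : Fin N) (j : ℕ) :
    Hsum k α N p j = Hsum k α N p' j := by
  have := Hsum_conj k α (Equiv.swap p' p) p' j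
  rwa [Equiv.swap_apply_left] at this

lemma cycleCount_pos {N : ℕ} (σ : Perm (Fin (N + 1))) : 0 < cycleCount σ := by
  rw [cycleCount_eq]
  have : Nonempty (Quotient (scSetoid σ)) := ⟨Quotient.mk _ 0⟩
  exact Nat.card_pos

lemma Tsum_eq_Hsum (hk : 0 < k) (N : ℕ) :
    Tsum k α (N + 1) = α * Hsum k α (N + 1) 0 0 := by
  rw [Tsum, Hsum, Finset.mul_sum]
  have hfil : ((Finset.univ : Finset (Perm (Fin (N+1)))).filter
        (fun σ => ∀ x : Fin (N+1), k ∣ orbLen σ x)) =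
      ((Finset.univ : Finset (Perm (Fin (N+1)))).filter
        (fun σ => orbLen σ 0 % k = 0 % k ∧
          ∀ x : Fin (N+1), ¬σ.SameCycle 0 x → k ∣ orbLen σ x)) := by
    apply Finset.filter_congr
    intro σ _
    constructor
    · intro h
      refine ⟨?_, fun x _ => h x⟩
      rw [Nat.zero_mod]
      exact Nat.mod_eq_zero_of_dvd (h 0)
    · rintro ⟨h0, hrest⟩ x
      by_cases hx : σ.SameCycle 0 x
      · rw [← orbLen_eq_of_sameCycle hx]
        rw [Nat.zero_mod] at h0
        exact Nat.dvd_of_mod_eq_zero h0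
      · exact hrest x hx
  rw [hfil]
  refine Finset.sum_congr rfl (fun σ _ => ?_)
  have h1 : 1 ≤ cycleCount σ := cycleCount_pos σ
  rw [← pow_succ']
  congr 1
  omega

end Sums

section Rec
variable (k : ℕ) (α : ℝ)

lemma mod_succ_shift (hk : 0 < k) (a b : ℕ) :
    (a + 1) % k = b % k ↔ a % k = (b + (k - 1)) % k := by
  constructor
  · intro h
    have h2 : (a + 1 + (k - 1)) % k = (b + (k - 1)) % k := Nat.ModEq.add_right _ h
    rwa [show a + 1 + (k - 1) = a + k by omega, Nat.add_mod_right] at h2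
  · intro h
    have h2 : (a + 1) % k = (b + (k - 1) + 1) % k :=
      Nat.ModEq.add_right 1 (show a ≡ b + (k - 1) [MOD k] from h)
    rwa [show b + (k - 1) + 1 = b + k by omega, Nat.add_mod_right] at h2

lemma H_rec (hk : 0 < k) (N : ℕ) (j : ℕ) :
    Hsum k α (N + 1) 0 j =
      (if 1 % k = j % k then Tsum k α N else 0) +
        ∑ q : Fin N, Hsum k α N q (j + (k - 1)) := by
  classical
  rw [Hsum, Finset.sum_filter]
  rw [← Equiv.sum_comp (Equiv.Perm.decomposeFin.symm)
      (fun σ : Perm (Fin (N + 1)) =>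
        if (orbLen σ 0 % k = j % k ∧ ∀ x : Fin (N+1), ¬σ.SameCycle 0 x → k ∣ orbLen σ x)
        then α ^ (cycleCount σ - 1) else 0)]
  rw [Fintype.sum_prod_type, Fin.sum_univ_succ]
  congr 1
  · -- the p = 0 part
    have hterm : ∀ τ : Perm (Fin N),
        (if (orbLen (decomposeFin.symm ((0 : Fin (N+1)), τ)) 0 % k = j % k ∧
            ∀ x : Fin (N+1), ¬(decomposeFin.symm ((0 : Fin (N+1)), τ)).SameCycle 0 x →
              k ∣ orbLen (decomposeFin.symm ((0 : Fin (N+1)), τ)) x)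
         then α ^ (cycleCount (decomposeFin.symm ((0 : Fin (N+1)), τ)) - 1) else 0) =
        (if 1 % k = j % k then (if (∀ x : Fin N, k ∣ orbLen τ x) then α ^ cycleCount τ else 0)
         else 0) := by
      intro τ
      have hcond : (orbLen (decomposeFin.symm ((0 : Fin (N+1)), τ)) 0 % k = j % k ∧
            ∀ x : Fin (N+1), ¬(decomposeFin.symm ((0 : Fin (N+1)), τ)).SameCycle 0 x →
              k ∣ orbLen (decomposeFin.symm ((0 : Fin (N+1)), τ)) x) ↔
          (1 % k = j % k ∧ ∀ x : Fin N, k ∣ orbLen τ x) := by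
        apply and_congr
        · rw [z_orbLen_zero]
        · constructor
          · intro h y
            have hy : ¬(decomposeFin.symm ((0 : Fin (N+1)), τ)).SameCycle 0 y.succ := by
              rw [z_sc_zero]
              exact Fin.succ_ne_zero y
            have := h y.succ hy
            rwa [z_orbLen_succ] at this
          · intro h x hx
            induction x using Fin.cases with
            | zero => exact absurd (SameCycle.refl _ _) hx
            | succ y => rw [z_orbLen_succ]; exact h y
      rw [if_congr hcond rfl rfl]
      have hcc : cycleCount (decomposeFin.symm ((0 : Fin (N+1)), τ)) - 1 = cycleCount τ := by
        rw [z_cycleCount]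
        omega
      rw [hcc]
      by_cases h1 : 1 % k = j % k
      · by_cases h2 : ∀ x : Fin N, k ∣ orbLen τ x
        · rw [if_pos ⟨h1, h2⟩, if_pos h1, if_pos h2]
        · rw [if_neg (fun hc => h2 hc.2), if_pos h1, if_neg h2]
      · rw [if_neg (fun hc => h1 hc.1), if_neg h1]
    rw [Finset.sum_congr rfl (fun τ _ => hterm τ)]
    by_cases h1 : 1 % k = j % k
    · rw [if_pos h1]
      simp only [if_pos h1]
      rw [Tsum, Finset.sum_filter]
    · rw [if_neg h1]
      simp only [if_neg h1]
      exact Finset.sum_const_zero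
  · -- the p = q.succ part
    refine Finset.sum_congr rfl (fun q _ => ?_)
    rw [Hsum, Finset.sum_filter]
    refine Finset.sum_congr rfl (fun τ _ => ?_)
    have hcond : (orbLen (decomposeFin.symm (q.succ, τ)) 0 % k = j % k ∧
          ∀ x : Fin (N+1), ¬(decomposeFin.symm (q.succ, τ)).SameCycle 0 x →
            k ∣ orbLen (decomposeFin.symm (q.succ, τ)) x) ↔
        (orbLen τ q % k = (j + (k - 1)) % k ∧
          ∀ y : Fin N, ¬τ.SameCycle q y → k ∣ orbLen τ y) := by
      apply and_congr
      · rw [s_orbLen_zero]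
        exact mod_succ_shift k hk _ _
      · constructor
        · intro h y hy
          have hy' : ¬(decomposeFin.symm (q.succ, τ)).SameCycle 0 y.succ := by
            rw [s_sc_zero]; exact hy
          have := h y.succ hy'
          rwa [s_orbLen_succ τ q y hy] at this
        · intro h x hx
          induction x using Fin.cases with
          | zero => exact absurd (SameCycle.refl _ _) hx
          | succ y =>
              have hy : ¬τ.SameCycle q y := by rw [← s_sc_zero τ q y]; exact hx
              rw [s_orbLen_succ τ q y hy]
              exact h y hy
    rw [if_congr hcond rfl rfl, s_cycleCount]

end Rec

section Closed
variable (k : ℕ) (α : ℝ)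

lemma H_closed (hk : 0 < k) : ∀ N j : ℕ, Hsum k α (N + 1) 0 j =
    ∑ s ∈ Finset.range (N + 1), if (s + 1) % k = j % k
      then (N.descFactorial s : ℝ) * Tsum k α (N - s) else 0 := by
  intro N
  induction N with
  | zero =>
      intro j
      rw [H_rec k α hk 0 j]
      simp
  | succ N ih =>
      intro j
      rw [H_rec k α hk (N + 1) j]
      rw [Finset.sum_congr rfl (fun (q : Fin (N+1)) _ => Hsum_mark k α q 0 (j + (k - 1)))]
      rw [Finset.sum_const, Finset.card_univ, Fintype.card_fin, nsmul_eq_mul]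
      rw [ih (j + (k - 1))]
      rw [Finset.sum_range_succ' _ (N + 1)]
      rw [add_comm]
      congr 1
      · rw [Finset.mul_sum]
        refine Finset.sum_congr rfl (fun s _ => ?_)
        by_cases hc : (s + 1 + 1) % k = j % k
        · rw [if_pos hc, if_pos ((mod_succ_shift k hk (s + 1) j).mp hc)]
          rw [show N + 1 - (s + 1) = N - s from Nat.succ_sub_succ N s]
          rw [Nat.succ_descFactorial_succ]
          push_cast
          ring
        · rw [if_neg hc, if_neg (fun hcc => hc ((mod_succ_shift k hk (s + 1) j).mpr hcc)),
            mul_zero]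
      · simp

lemma rising_sum (hk : 0 < k) : ∀ n : ℕ,
    ((n : ℝ) * (k : ℝ)) / (n.factorial : ℝ) * risingFactorial (α / k) n =
      α * ∑ j ∈ Finset.range n, risingFactorial (α / k) j / (j.factorial : ℝ) := by
  have hk' : (k : ℝ) ≠ 0 := Nat.cast_ne_zero.mpr (by omega)
  intro n
  induction n with
  | zero => simp
  | succ n ih =>
      have hfn : ((n.factorial : ℝ)) ≠ 0 := Nat.cast_ne_zero.mpr (Nat.factorial_ne_zero n)
      have hfn1 : (((n+1).factorial : ℝ)) ≠ 0 := Nat.cast_ne_zero.mpr (Nat.factorial_ne_zero _)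
      rw [Finset.sum_range_succ, mul_add, ← ih]
      rw [show risingFactorial (α / k) (n + 1) = risingFactorial (α / k) n * (α / k + n) from
        Finset.prod_range_succ _ n]
      have hfs : ((n+1).factorial : ℝ) = ((n : ℝ) + 1) * (n.factorial : ℝ) := by
        rw [Nat.factorial_succ]; push_cast; ring
      rw [hfs]
      push_cast
      field_simp
      ring

end Closed

section Main
variable (k : ℕ) (α : ℝ)

theorem Tsum_main (hk : 0 < k) : ∀ n : ℕ, Tsum k α (n * k) =
    ((n * k).factorial : ℝ) / (n.factorial : ℝ) * risingFactorial (α / k) n := by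
  intro n
  induction n using Nat.strong_induction_on with
  | _ n ih =>
  match n, ih with
  | 0, _ => rw [Nat.zero_mul, Tsum_zero]; simp [risingFactorial]
  | (m+1), ih =>
    have hpos : 0 < (m + 1) * k := Nat.mul_pos (Nat.succ_pos m) hk
    have hMk : ((m + 1) * k - 1) + 1 = (m + 1) * k := by omega
    set M := (m + 1) * k - 1 with hMdef
    rw [show (m + 1) * k = M + 1 from hMk.symm]
    rw [Tsum_eq_Hsum k α hk M, H_closed k α hk M 0]
    have hstep1 : (∑ s ∈ Finset.range (M + 1), if (s + 1) % k = 0 % k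
          then (M.descFactorial s : ℝ) * Tsum k α (M - s) else 0)
        = ∑ i ∈ Finset.range (m + 1),
            (M.descFactorial ((i + 1) * k - 1) : ℝ) * Tsum k α ((m - i) * k) := by
      rw [← Finset.sum_filter]
      refine Finset.sum_nbij' (i := fun s => (s + 1) / k - 1) (j := fun i => (i + 1) * k - 1)
        ?_ ?_ ?_ ?_ ?_
      · intro s hs
        beta_reduce
        rw [Finset.mem_filter, Finset.mem_range] at hs
        obtain ⟨hs1, hs2⟩ := hs
        rw [Nat.zero_mod] at hs2
        have hdvd : k ∣ (s + 1) := Nat.dvd_of_mod_eq_zero hs2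
        have htk : ((s + 1) / k) * k = s + 1 := Nat.div_mul_cancel hdvd
        have ht1 : 1 ≤ (s + 1) / k := by
          rcases Nat.eq_zero_or_pos ((s + 1) / k) with h | h
          · rw [h, zero_mul] at htk; omega
          · exact h
        have ht2 : (s + 1) / k ≤ m + 1 := by
          by_contra hcon
          push_neg at hcon
          have : (m + 2) * k ≤ ((s + 1) / k) * k := Nat.mul_le_mul_right k hcon
          have h2 : (m + 2) * k = (m + 1) * k + k := by ring
          omega
        rw [Finset.mem_range]
        omega
      · intro i hi
        beta_reduce
        rw [Finset.mem_range] at hi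
        have h1 : 1 ≤ (i + 1) * k := Nat.mul_pos (Nat.succ_pos i) hk
        have h2 : (i + 1) * k ≤ (m + 1) * k := Nat.mul_le_mul_right k (by omega)
        rw [Finset.mem_filter, Finset.mem_range]
        constructor
        · omega
        · rw [Nat.zero_mod, show (i + 1) * k - 1 + 1 = (i + 1) * k by omega]
          exact Nat.mod_eq_zero_of_dvd (dvd_mul_left k (i + 1))
      · intro s hs
        beta_reduce
        rw [Finset.mem_filter, Finset.mem_range] at hs
        obtain ⟨hs1, hs2⟩ := hs
        rw [Nat.zero_mod] at hs2
        have hdvd : k ∣ (s + 1) := Nat.dvd_of_mod_eq_zero hs2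
        have htk : ((s + 1) / k) * k = s + 1 := Nat.div_mul_cancel hdvd
        have ht1 : 1 ≤ (s + 1) / k := by
          rcases Nat.eq_zero_or_pos ((s + 1) / k) with h | h
          · rw [h, zero_mul] at htk; omega
          · exact h
        have heq : ((s + 1) / k - 1 + 1) = (s + 1) / k := by omega
        rw [heq, htk]
        omega
      · intro i hi
        beta_reduce
        have h1 : 1 ≤ (i + 1) * k := Nat.mul_pos (Nat.succ_pos i) hk
        rw [show (i + 1) * k - 1 + 1 = (i + 1) * k by omega, Nat.mul_div_cancel _ hk]
        omega
      · intro s hs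
        beta_reduce
        rw [Finset.mem_filter, Finset.mem_range] at hs
        obtain ⟨hs1, hs2⟩ := hs
        rw [Nat.zero_mod] at hs2
        have hdvd : k ∣ (s + 1) := Nat.dvd_of_mod_eq_zero hs2
        have htk : ((s + 1) / k) * k = s + 1 := Nat.div_mul_cancel hdvd
        have ht1 : 1 ≤ (s + 1) / k := by
          rcases Nat.eq_zero_or_pos ((s + 1) / k) with h | h
          · rw [h, zero_mul] at htk; omega
          · exact h
        have ht2 : (s + 1) / k ≤ m + 1 := by
          by_contra hcon
          push_neg at hcon
          have : (m + 2) * k ≤ ((s + 1) / k) * k := Nat.mul_le_mul_right k hcon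
          have h2 : (m + 2) * k = (m + 1) * k + k := by ring
          omega
        have hseq : ((s + 1) / k - 1 + 1) * k - 1 = s := by
          rw [show (s + 1) / k - 1 + 1 = (s + 1) / k by omega, htk]
          omega
        rw [hseq]
        have hms : M - s = (m - ((s + 1) / k - 1)) * k := by
          have hmm : m - ((s + 1) / k - 1) = (m + 1) - (s + 1) / k := by omega
          rw [hmm, Nat.sub_mul]
          omega
        rw [hms]
    rw [hstep1]
    have hstep2 : ∀ i ∈ Finset.range (m + 1),
        (M.descFactorial ((i + 1) * k - 1) : ℝ) * Tsum k α ((m - i) * k)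
        = (M.factorial : ℝ) * (risingFactorial (α / k) (m - i) / ((m - i).factorial : ℝ)) := by
      intro i hi
      rw [Finset.mem_range] at hi
      rw [ih (m - i) (by omega)]
      have h1 : 1 ≤ (i + 1) * k := Nat.mul_pos (Nat.succ_pos i) hk
      have h2 : (i + 1) * k ≤ (m + 1) * k := Nat.mul_le_mul_right k (by omega)
      have hle : (i + 1) * k - 1 ≤ M := by omega
      have hMsub : M - ((i + 1) * k - 1) = (m - i) * k := by
        have hmm : (m - i) = (m + 1) - (i + 1) := by omega
        rw [hmm, Nat.sub_mul]
        omega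
      have hdF : ((m - i) * k).factorial * M.descFactorial ((i + 1) * k - 1) = M.factorial := by
        rw [← hMsub]
        exact Nat.factorial_mul_descFactorial hle
      have hfc : (((m - i) * k).factorial : ℝ) ≠ 0 :=
        Nat.cast_ne_zero.mpr (Nat.factorial_ne_zero _)
      have hfmi : (((m - i)).factorial : ℝ) ≠ 0 :=
        Nat.cast_ne_zero.mpr (Nat.factorial_ne_zero _)
      have hdFr : (M.descFactorial ((i + 1) * k - 1) : ℝ)
          = (M.factorial : ℝ) / (((m - i) * k).factorial : ℝ) := by
        rw [eq_div_iff hfc]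
        rw [mul_comm]
        exact_mod_cast congrArg (Nat.cast : ℕ → ℝ) hdF
      rw [hdFr]
      field_simp
    rw [Finset.sum_congr rfl hstep2]
    have hreflect : (∑ i ∈ Finset.range (m + 1),
        (M.factorial : ℝ) * (risingFactorial (α / k) (m - i) / ((m - i).factorial : ℝ)))
        = ∑ j ∈ Finset.range (m + 1),
            (M.factorial : ℝ) * (risingFactorial (α / k) j / ((j).factorial : ℝ)) := by
      have := Finset.sum_range_reflect
        (fun j => (M.factorial : ℝ) * (risingFactorial (α / k) j / ((j).factorial : ℝ))) (m + 1)
      simpa using this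
    rw [hreflect, ← Finset.mul_sum, ← mul_assoc, mul_comm α ((M.factorial : ℝ)), mul_assoc]
    rw [← rising_sum k α hk (m + 1)]
    have hfM1 : ((M + 1).factorial : ℝ) = ((m + 1 : ℕ) * k : ℕ) * (M.factorial : ℝ) := by
      rw [← hMk, Nat.factorial_succ]
      push_cast
      ring
    rw [hfM1]
    have hfm1 : (((m + 1).factorial : ℝ)) ≠ 0 := Nat.cast_ne_zero.mpr (Nat.factorial_ne_zero _)
    push_cast
    field_simp

end Main

end EPI

/-- The permutation form of the even-partition identity: the sum of `α^{#σ}` over all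
permutations of `{1,…,nk}` each of whose cycle lengths (the cycle length of `x` being the
size of its orbit, so fixed points have cycle length 1) is divisible by `k` equals
`[(nk)!/n!]·(α/k)^{↑n}`. -/
theorem even_permutation_identity (n k : ℕ) (hn : 1 ≤ n) (hk : 1 ≤ k) (α : ℝ) :
    ∑ σ ∈ (Finset.univ : Finset (Equiv.Perm (Fin (n * k)))).filter
        (fun σ => ∀ x : Fin (n * k), k ∣ Fintype.card {y : Fin (n * k) // σ.SameCycle x y}),
      α ^ cycleCount σ =
    ((Nat.factorial (n * k) : ℝ) / (Nat.factorial n : ℝ)) * risingFactorial (α / k) n := by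
  have h := EPI.Tsum_main k α (by omega) n
  exact h
end
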